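/- arXiv:1010.3726 — 4 statements merged into one kernel-verified Lean document; each statement's English description precedes it below -/
import Mathlib

section
/- Let A1, A2, B1, B2 be discrete random variables with joint distribution p(a1,a2,b1,b2) = p(a1,b1)p(a2,b2) (i.e., (A1,B1) is independent of (A2,B2)). Let M1 = f(A1,A2) be a function of (A1,A2) and M2 = g(B1,B2,M1) be a function of (B1,B2,M1). Then the conditional mutual information I(A2; B1 | M1, M2, A1, B2) = 0. -/
open Finset

open Classical in
/-- Probability of an event under a pmf `p` on a finite sample space. -/
noncomputable def pr {Ω : Type*} [Fintype Ω] (p : Ω → ℝ) (E : Ω → Prop) : ℝ :=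
  ∑ ω, if E ω then p ω else 0

/-- Shannon entropy (base 2) of a discrete random variable. -/
noncomputable def entH {Ω α : Type*} [Fintype Ω] [Fintype α] (p : Ω → ℝ) (X : Ω → α) : ℝ :=
  -∑ x, pr p (fun ω => X ω = x) * Real.logb 2 (pr p (fun ω => X ω = x))

/-- Conditional Shannon entropy H(X|Y) (base 2). -/
noncomputable def condH {Ω α β : Type*} [Fintype Ω] [Fintype α] [Fintype β]
    (p : Ω → ℝ) (X : Ω → α) (Y : Ω → β) : ℝ :=
  -∑ x, ∑ y, pr p (fun ω => X ω = x ∧ Y ω = y) *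
      Real.logb 2 (pr p (fun ω => X ω = x ∧ Y ω = y) / pr p (fun ω => Y ω = y))

/-- Mutual information I(X;Y) (base 2). -/
noncomputable def mutI {Ω α β : Type*} [Fintype Ω] [Fintype α] [Fintype β]
    (p : Ω → ℝ) (X : Ω → α) (Y : Ω → β) : ℝ :=
  ∑ x, ∑ y, pr p (fun ω => X ω = x ∧ Y ω = y) *
      Real.logb 2 (pr p (fun ω => X ω = x ∧ Y ω = y) /
        (pr p (fun ω => X ω = x) * pr p (fun ω => Y ω = y)))

/-- Conditional mutual information I(X;Y|Z) (base 2). -/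
noncomputable def condMI {Ω α β γ : Type*} [Fintype Ω] [Fintype α] [Fintype β] [Fintype γ]
    (p : Ω → ℝ) (X : Ω → α) (Y : Ω → β) (Z : Ω → γ) : ℝ :=
  ∑ x, ∑ y, ∑ z,
    pr p (fun ω => X ω = x ∧ Y ω = y ∧ Z ω = z) *
      Real.logb 2
        ((pr p (fun ω => X ω = x ∧ Y ω = y ∧ Z ω = z) * pr p (fun ω => Z ω = z)) /
          (pr p (fun ω => X ω = x ∧ Z ω = z) * pr p (fun ω => Y ω = y ∧ Z ω = z)))

section Helpers
variable {Ω : Type*} [Fintype Ω] (p : Ω → ℝ)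

lemma pr_congr {E F : Ω → Prop} (h : ∀ ω, E ω ↔ F ω) : pr p E = pr p F := by
  rw [show E = F from funext fun ω => propext (h ω)]

lemma pr_false : pr p (fun _ => False) = 0 := by simp [pr]

lemma pr_nonneg (hp : ∀ ω, 0 ≤ p ω) (E : Ω → Prop) : 0 ≤ pr p E := by
  classical
  apply Finset.sum_nonneg
  intro ω _
  split <;> [exact hp ω; rfl]

lemma pr_decomp {β : Type*} [Fintype β] (Y : Ω → β) (E : Ω → Prop) :
    pr p E = ∑ y, pr p (fun ω => E ω ∧ Y ω = y) := by
  classical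
  unfold pr
  rw [Finset.sum_comm]
  refine Finset.sum_congr rfl fun ω _ => ?_
  by_cases h : E ω
  · simp [h, Finset.sum_ite_eq]
  · simp [h]

end Helpers

/-- Kaspi's lemma, part 1: if (A1,B1) ⟂ (A2,B2), M1 = f(A1,A2), M2 = g(B1,B2,M1),
then I(A2; B1 | M1, M2, A1, B2) = 0. -/
theorem stmt_0 {Ω α₁ α₂ β₁ β₂ μ₁ μ₂ : Type*} [Fintype Ω] [Fintype α₁] [Fintype α₂]
    [Fintype β₁] [Fintype β₂] [Fintype μ₁] [Fintype μ₂]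
    (p : Ω → ℝ) (hp : ∀ ω, 0 ≤ p ω) (hsum : ∑ ω, p ω = 1)
    (A1 : Ω → α₁) (A2 : Ω → α₂) (B1 : Ω → β₁) (B2 : Ω → β₂)
    (hindep : ∀ a1 b1 a2 b2,
      pr p (fun ω => A1 ω = a1 ∧ B1 ω = b1 ∧ A2 ω = a2 ∧ B2 ω = b2) =
        pr p (fun ω => A1 ω = a1 ∧ B1 ω = b1) * pr p (fun ω => A2 ω = a2 ∧ B2 ω = b2))
    (f : α₁ → α₂ → μ₁) (g : β₁ → β₂ → μ₁ → μ₂)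
    (M1 : Ω → μ₁) (hM1 : ∀ ω, M1 ω = f (A1 ω) (A2 ω))
    (M2 : Ω → μ₂) (hM2 : ∀ ω, M2 ω = g (B1 ω) (B2 ω) (M1 ω)) :
    condMI p A2 B1 (fun ω => (M1 ω, M2 ω, A1 ω, B2 ω)) = 0 := by
  classical
  unfold condMI
  apply Finset.sum_eq_zero; intro x _
  apply Finset.sum_eq_zero; intro y _
  apply Finset.sum_eq_zero; intro z _
  obtain ⟨m1, m2, a1, b2⟩ := z
  set P1 : β₁ → ℝ := fun b => pr p (fun ω => A1 ω = a1 ∧ B1 ω = b) with hP1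
  set P2 : α₂ → ℝ := fun a => pr p (fun ω => A2 ω = a ∧ B2 ω = b2) with hP2
  have hP1nn : ∀ b, 0 ≤ P1 b := fun b => pr_nonneg p hp _
  have hP2nn : ∀ a, 0 ≤ P2 a := fun a => pr_nonneg p hp _
  -- the joint probability of (A2 = x', B1 = y', Z = z)
  have hXYZ : ∀ x' y',
      pr p (fun ω => A2 ω = x' ∧ B1 ω = y' ∧
        (M1 ω, M2 ω, A1 ω, B2 ω) = (m1, m2, a1, b2)) =
      if f a1 x' = m1 ∧ g y' b2 m1 = m2 then P1 y' * P2 x' else 0 := by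
    intro x' y'
    by_cases hc : f a1 x' = m1 ∧ g y' b2 m1 = m2
    · rw [if_pos hc, hP1, hP2]
      rw [← hindep a1 y' x' b2]
      apply pr_congr
      intro ω
      simp only [Prod.mk.injEq]
      constructor
      · rintro ⟨h1, h2, _, _, h5, h6⟩; exact ⟨h5, h2, h1, h6⟩
      · rintro ⟨h5, h2, h1, h6⟩
        refine ⟨h1, h2, ?_, ?_, h5, h6⟩
        · rw [hM1, h5, h1]; exact hc.1
        · rw [hM2, h2, h6, hM1, h5, h1, hc.1]; exact hc.2
    · rw [if_neg hc]
      rw [pr_congr p (F := fun _ => False), pr_false]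
      intro ω
      simp only [Prod.mk.injEq, iff_false]
      rintro ⟨h1, h2, h3, h4, h5, h6⟩
      apply hc
      have e1 := hM1 ω
      rw [h5, h1, h3] at e1
      have e2 := hM2 ω
      rw [h2, h6, h3, h4] at e2
      exact ⟨e1.symm, e2.symm⟩
  set c1 : α₂ → Prop := fun a => f a1 a = m1 with hc1
  set c2 : β₁ → Prop := fun b => g b b2 m1 = m2 with hc2
  set SA : ℝ := ∑ a, if c1 a then P2 a else 0 with hSA
  set SB : ℝ := ∑ b, if c2 b then P1 b else 0 with hSB
  have hSAnn : 0 ≤ SA := Finset.sum_nonneg fun a _ => by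
    split <;> [exact hP2nn a; rfl]
  have hSBnn : 0 ≤ SB := Finset.sum_nonneg fun b _ => by
    split <;> [exact hP1nn b; rfl]
  have hXZ : ∀ x',
      pr p (fun ω => A2 ω = x' ∧ (M1 ω, M2 ω, A1 ω, B2 ω) = (m1, m2, a1, b2)) =
      if c1 x' then P2 x' * SB else 0 := by
    intro x'
    rw [pr_decomp p B1]
    have : ∀ b, pr p (fun ω => (A2 ω = x' ∧
        (M1 ω, M2 ω, A1 ω, B2 ω) = (m1, m2, a1, b2)) ∧ B1 ω = b) =
        if f a1 x' = m1 ∧ g b b2 m1 = m2 then P1 b * P2 x' else 0 := by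
      intro b
      rw [← hXYZ x' b]
      exact pr_congr p fun ω => by tauto
    simp_rw [this]
    by_cases h1 : c1 x'
    · rw [if_pos h1]
      rw [Finset.mul_sum]
      refine Finset.sum_congr rfl fun b _ => ?_
      by_cases h2 : c2 b
      · rw [if_pos ⟨h1, h2⟩, if_pos h2]; ring
      · rw [if_neg (by tauto), if_neg h2, mul_zero]
    · rw [if_neg h1]
      refine Finset.sum_eq_zero fun b _ => if_neg (by tauto)
  have hYZ : ∀ y',
      pr p (fun ω => B1 ω = y' ∧ (M1 ω, M2 ω, A1 ω, B2 ω) = (m1, m2, a1, b2)) =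
      if c2 y' then P1 y' * SA else 0 := by
    intro y'
    rw [pr_decomp p A2]
    have : ∀ a, pr p (fun ω => (B1 ω = y' ∧
        (M1 ω, M2 ω, A1 ω, B2 ω) = (m1, m2, a1, b2)) ∧ A2 ω = a) =
        if f a1 a = m1 ∧ g y' b2 m1 = m2 then P1 y' * P2 a else 0 := by
      intro a
      rw [← hXYZ a y']
      exact pr_congr p fun ω => by tauto
    simp_rw [this]
    by_cases h2 : c2 y'
    · rw [if_pos h2]
      rw [Finset.mul_sum]
      refine Finset.sum_congr rfl fun a _ => ?_
      by_cases h1 : c1 a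
      · rw [if_pos ⟨h1, h2⟩, if_pos h1]
      · rw [if_neg (by tauto), if_neg h1, mul_zero]
    · rw [if_neg h2]
      refine Finset.sum_eq_zero fun a _ => if_neg (by tauto)
  have hZ : pr p (fun ω => (M1 ω, M2 ω, A1 ω, B2 ω) = (m1, m2, a1, b2)) = SA * SB := by
    rw [pr_decomp p A2]
    have : ∀ a, pr p (fun ω =>
        (M1 ω, M2 ω, A1 ω, B2 ω) = (m1, m2, a1, b2) ∧ A2 ω = a) =
        if c1 a then P2 a * SB else 0 := by
      intro a
      rw [← hXZ a]
      exact pr_congr p fun ω => by tauto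
    simp_rw [this, hSA, Finset.sum_mul]
    refine Finset.sum_congr rfl fun a _ => ?_
    by_cases h : c1 a
    · simp [h]
    · simp [h]
  -- now the main computation
  rw [hXYZ x y, hXZ x, hYZ y, hZ]
  by_cases hc : f a1 x = m1 ∧ g y b2 m1 = m2
  · rw [if_pos hc, if_pos hc.1, if_pos hc.2]
    by_cases hz : P1 y * P2 x = 0
    · rw [hz, zero_mul]
    · have hy : P1 y ≠ 0 := fun h => hz (by rw [h, zero_mul])
      have hx : P2 x ≠ 0 := fun h => hz (by rw [h, mul_zero])
      have hSApos : 0 < SA := by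
        have hle : P2 x ≤ SA := by
          rw [hSA]
          have := Finset.single_le_sum (f := fun a => if c1 a then P2 a else 0)
            (fun a _ => by split <;> [exact hP2nn a; exact le_rfl])
            (Finset.mem_univ x)
          simpa [hc1, hc.1] using this
        exact lt_of_lt_of_le (lt_of_le_of_ne (hP2nn x) (Ne.symm hx)) hle
      have hSBpos : 0 < SB := by
        have hle : P1 y ≤ SB := by
          rw [hSB]
          have := Finset.single_le_sum (f := fun b => if c2 b then P1 b else 0)
            (fun b _ => by split <;> [exact hP1nn b; exact le_rfl])
            (Finset.mem_univ y)
          simpa [hc2, hc.2] using this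
        exact lt_of_lt_of_le (lt_of_le_of_ne (hP1nn y) (Ne.symm hy)) hle
      have harg : P1 y * P2 x * (SA * SB) = P2 x * SB * (P1 y * SA) := by ring
      rw [harg, div_self (by positivity), Real.logb_one, mul_zero]
  · rw [if_neg hc, zero_mul]
end

section
/- Let (X_i, Y_i, Z_i), i=1,...,n, be i.i.d. with joint pmf p(x)p(y|x)p(z|y), and let M2 be any function of (X^n, Y^n). Define U_i = (M2, X^{i-1}, Y^{i-1}, Z_{i+1}^n). Then the Markov chain Z^{i-1} - (U_i, Z_i) - (X_i, Y_i) holds, i.e., I(X_i, Y_i; Z^{i-1} | U_i, Z_i) = 0. -/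
open Finset

open Classical in
lemma pr_mul_pr {Ω : Type*} [Fintype Ω] (p : Ω → ℝ) (E F : Ω → Prop) :
    pr p E * pr p F =
      ∑ z : Ω × Ω, (if E z.1 then p z.1 else 0) * (if F z.2 then p z.2 else 0) := by
  rw [Fintype.sum_prod_type, pr, pr, Finset.sum_mul_sum]

lemma condMI_eq_zero {Ω α β γ : Type*} [Fintype Ω] [Fintype α] [Fintype β] [Fintype γ]
    (p : Ω → ℝ) (X : Ω → α) (Y : Ω → β) (Z : Ω → γ)
    (h : ∀ x y z, pr p (fun ω => X ω = x ∧ Y ω = y ∧ Z ω = z) * pr p (fun ω => Z ω = z)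
        = pr p (fun ω => X ω = x ∧ Z ω = z) * pr p (fun ω => Y ω = y ∧ Z ω = z)) :
    condMI p X Y Z = 0 := by
  unfold condMI
  refine Finset.sum_eq_zero fun x _ => Finset.sum_eq_zero fun y _ =>
    Finset.sum_eq_zero fun z _ => ?_
  rw [h x y z]
  rcases eq_or_ne (pr p (fun ω => X ω = x ∧ Z ω = z) * pr p (fun ω => Y ω = y ∧ Z ω = z)) 0
    with hd | hd
  · simp [hd]
  · rw [div_self hd]; simp

private def swFun {𝒳 𝒴 𝒵 : Type*} {n : ℕ} (i : Fin n) :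
    ((Fin n → 𝒳 × 𝒴 × 𝒵) × (Fin n → 𝒳 × 𝒴 × 𝒵)) →
      ((Fin n → 𝒳 × 𝒴 × 𝒵) × (Fin n → 𝒳 × 𝒴 × 𝒵)) :=
  fun z => (fun j => if j < i then ((z.1 j).1, (z.1 j).2.1, (z.2 j).2.2) else z.1 j,
            fun j => if j < i then ((z.2 j).1, (z.2 j).2.1, (z.1 j).2.2) else z.2 j)

private lemma swFun_invol {𝒳 𝒴 𝒵 : Type*} {n : ℕ} (i : Fin n) :
    Function.Involutive (swFun (𝒳 := 𝒳) (𝒴 := 𝒴) (𝒵 := 𝒵) (n := n) i) := by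
  intro z
  unfold swFun
  refine Prod.ext ?_ ?_ <;> funext j <;> by_cases hj : j < i <;> simp [hj]


/-- For i.i.d. triples with pmf p(x)p(y|x)p(z|y) and M2 a function of (X^n, Y^n),
with U_i = (M2, X^{i-1}, Y^{i-1}, Z_{i+1}^n) we have the Markov chain
Z^{i-1} - (U_i, Z_i) - (X_i, Y_i). -/
theorem stmt_6 {𝒳 𝒴 𝒵 μ : Type*} [Fintype 𝒳] [Fintype 𝒴] [Fintype 𝒵] [Fintype μ]
    (n : ℕ) (q : 𝒳 × 𝒴 × 𝒵 → ℝ) (hq : ∀ t, 0 ≤ q t) (hsum : ∑ t, q t = 1)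
    (hmarkov : ∀ x y z, q (x, y, z) * (∑ x', ∑ z', q (x', y, z')) =
      (∑ z', q (x, y, z')) * (∑ x', q (x', y, z)))
    (m2 : (Fin n → 𝒳 × 𝒴) → μ) (i : Fin n) :
    condMI (fun ω : Fin n → 𝒳 × 𝒴 × 𝒵 => ∏ j, q (ω j))
      (fun ω => ((ω i).1, (ω i).2.1))
      (fun ω => (fun j : {j : Fin n // j < i} => (ω j.1).2.2))
      (fun ω => ((m2 (fun j => ((ω j).1, (ω j).2.1)),
                  (fun j : {j : Fin n // j < i} => ((ω j.1).1, (ω j.1).2.1)),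
                  (fun j : {j : Fin n // i < j} => (ω j.1).2.2)),
                 (ω i).2.2)) = 0 := by
  classical
  apply condMI_eq_zero
  intro a b c
  rw [pr_mul_pr, pr_mul_pr]
  refine Fintype.sum_bijective (swFun i) (swFun_invol i).bijective _ _ ?_
  rintro ⟨ω, ω'⟩
  set ω'' := (swFun i (ω, ω')).1 with hω''
  set ω''' := (swFun i (ω, ω')).2 with hω'''
  -- basic component facts
  have hXi : ω'' i = ω i := by simp [hω'', swFun]
  have hXi' : ω''' i = ω' i := by simp [hω''', swFun]
  have hm : (fun j : Fin n => ((ω'' j).1, (ω'' j).2.1)) = fun j => ((ω j).1, (ω j).2.1) := by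
    funext j; by_cases hj : j < i <;> simp [hω'', swFun, hj]
  have hm' : (fun j : Fin n => ((ω''' j).1, (ω''' j).2.1)) = fun j => ((ω' j).1, (ω' j).2.1) := by
    funext j; by_cases hj : j < i <;> simp [hω''', swFun, hj]
  have hv : (fun j : {j : Fin n // j < i} => ((ω'' j.1).1, (ω'' j.1).2.1))
      = fun j => ((ω j.1).1, (ω j.1).2.1) := funext fun j => congrFun hm j.1
  have hv' : (fun j : {j : Fin n // j < i} => ((ω''' j.1).1, (ω''' j.1).2.1))
      = fun j => ((ω' j.1).1, (ω' j.1).2.1) := funext fun j => congrFun hm' j.1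
  have hw : (fun j : {j : Fin n // i < j} => (ω'' j.1).2.2)
      = fun j => (ω j.1).2.2 := by
    funext j; simp [hω'', swFun, asymm j.2]
  have hw' : (fun j : {j : Fin n // i < j} => (ω''' j.1).2.2)
      = fun j => (ω' j.1).2.2 := by
    funext j; simp [hω''', swFun, asymm j.2]
  have hY : (fun j : {j : Fin n // j < i} => (ω'' j.1).2.2)
      = fun j => (ω' j.1).2.2 := by
    funext j; simp [hω'', swFun, j.2]
  have hY' : (fun j : {j : Fin n // j < i} => (ω''' j.1).2.2)
      = fun j => (ω j.1).2.2 := by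
    funext j; simp [hω''', swFun, j.2]
  simp only [hXi, hXi', hm, hm', hv, hv', hw, hw', hY, hY']
  -- now case on the conditions
  by_cases hA : ((ω i).1, (ω i).2.1) = a
  rotate_left
  · simp [hA]
  by_cases hB : (fun j : {j : Fin n // j < i} => (ω j.1).2.2) = b
  rotate_left
  · simp [hB]
  by_cases hC : ((m2 fun j => ((ω j).1, (ω j).2.1),
      (fun j : {j : Fin n // j < i} => ((ω j.1).1, (ω j.1).2.1)),
      fun j : {j : Fin n // i < j} => (ω j.1).2.2), (ω i).2.2) = c
  rotate_left
  · simp [hC]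
  by_cases hC' : ((m2 fun j => ((ω' j).1, (ω' j).2.1),
      (fun j : {j : Fin n // j < i} => ((ω' j.1).1, (ω' j.1).2.1)),
      fun j : {j : Fin n // i < j} => (ω' j.1).2.2), (ω' i).2.2) = c
  rotate_left
  · simp [hC']
  simp only [hA, hB, hC, hC', and_self, if_true, true_and, and_true, if_pos]
  -- remaining: p ω * p ω' = p ω'' * p ω'''
  have hvv : ∀ j : Fin n, j < i → (ω j).1 = (ω' j).1 ∧ (ω j).2.1 = (ω' j).2.1 := by
    intro j hj
    have h1 := congrArg (fun t => t.1.2.1) hC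
    have h2 := congrArg (fun t => t.1.2.1) hC'
    have h3 := congrFun (h1.trans h2.symm) ⟨j, hj⟩
    simp only at h3
    exact Prod.mk_inj.mp h3
  have : (∏ j, q (ω j)) * ∏ j, q (ω' j) = (∏ j, q (ω'' j)) * ∏ j, q (ω''' j) := by
    rw [← Finset.prod_mul_distrib, ← Finset.prod_mul_distrib]
    refine Finset.prod_congr rfl fun j _ => ?_
    by_cases hj : j < i
    · obtain ⟨h1, h2⟩ := hvv j hj
      have e1 : ω'' j = ((ω j).1, (ω j).2.1, (ω' j).2.2) := by simp [hω'', swFun, hj]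
      have e2 : ω''' j = ((ω' j).1, (ω' j).2.1, (ω j).2.2) := by simp [hω''', swFun, hj]
      have e3 : ((ω j).1, (ω j).2.1, (ω' j).2.2) = ω' j := by rw [h1, h2]
      have e4 : ((ω' j).1, (ω' j).2.1, (ω j).2.2) = ω j := by rw [← h1, ← h2]
      rw [e1, e2, e3, e4, mul_comm]
    · have e1 : ω'' j = ω j := by simp [hω'', swFun, hj]
      have e2 : ω''' j = ω' j := by simp [hω''', swFun, hj]
      rw [e1, e2]
  exact this
end

section
/- Let A, B, Z be independent real Gaussian random variables with variances \sigma_A^2, \sigma_B^2, \sigma_Z^2 > 0, and set X = A + B + Z, Y = B + Z. Let U' = \alpha A + \beta (B+Z) + W where W is Gaussian with variance \sigma_W^2 > 0, independent of (A,B,Z). Then the conditional variance satisfies Var(X | U', Y) = Var(A | \alpha A + W). -/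
/-!
We model jointly Gaussian zero-mean random variables as vectors in a real inner
product space (the L² space of zero-mean variables): the variance of `x` is
`‖x‖²`, the covariance of `x` and `y` is `⟪x, y⟫`, and independence of jointly
Gaussian zero-mean variables corresponds to orthogonality.  For jointly Gaussian
variables, the MMSE conditional variance `Var(x | S)` equals the squared distance
from `x` to the linear span of `S`, and `E[x | s]` is the orthogonal projection
of `x` onto `s`.
-/

open Real RealInnerProductSpace

/-- MMSE conditional variance of `x` given the (jointly Gaussian, zero-mean)
collection `S`: the squared distance from `x` to the linear span of `S`. -/
noncomputable def condVar {V : Type*} [NormedAddCommGroup V] [InnerProductSpace ℝ V]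
    (x : V) (S : Set V) : ℝ :=
  ⨅ y : Submodule.span ℝ S, ‖x - (y : V)‖ ^ 2

lemma condVar_bdd {V : Type*} [NormedAddCommGroup V] [InnerProductSpace ℝ V]
    (x : V) (S : Set V) :
    BddBelow (Set.range fun y : Submodule.span ℝ S => ‖x - (y : V)‖ ^ 2) := by
  refine ⟨0, ?_⟩
  rintro _ ⟨y, rfl⟩
  positivity

/-- With A, B, Z, W independent zero-mean Gaussians, X = A+B+Z, Y = B+Z and
U' = αA + β(B+Z) + W, we have Var(X | U', Y) = Var(A | αA + W). -/
theorem stmt_9 {V : Type*} [NormedAddCommGroup V] [InnerProductSpace ℝ V]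
    (A B Z W : V) (σA σB σZ σW : ℝ)
    (hσA : 0 < σA) (hσB : 0 < σB) (hσZ : 0 < σZ) (hσW : 0 < σW)
    (hA : ‖A‖ ^ 2 = σA) (hB : ‖B‖ ^ 2 = σB) (hZ : ‖Z‖ ^ 2 = σZ) (hW : ‖W‖ ^ 2 = σW)
    (hAB : ⟪A, B⟫ = 0) (hAZ : ⟪A, Z⟫ = 0) (hAW : ⟪A, W⟫ = 0)
    (hBZ : ⟪B, Z⟫ = 0) (hBW : ⟪B, W⟫ = 0) (hZW : ⟪Z, W⟫ = 0)
    (α β : ℝ) :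
    condVar (A + B + Z) {α • A + β • (B + Z) + W, B + Z} =
      condVar A {α • A + W} := by
  have hWB : ⟪W, B⟫ = 0 := by rw [real_inner_comm]; exact hBW
  have hWZ : ⟪W, Z⟫ = 0 := by rw [real_inner_comm]; exact hZW
  set u := α • A + W with hu
  set Y := B + Z with hYdef
  have hAY : ⟪A, Y⟫ = 0 := by
    simp [hYdef, inner_add_right, hAB, hAZ]
  have huY : ⟪u, Y⟫ = 0 := by
    simp [hu, hYdef, inner_add_right, inner_add_left, inner_smul_left, hAB, hAZ, hWB, hWZ]
  have hU' : α • A + β • (B + Z) + W = u + β • Y := by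
    rw [hu, hYdef]; abel
  have hX : A + B + Z = A + Y := by rw [hYdef, add_assoc]
  have hnorm : ∀ s t : ℝ,
      ‖A + Y - (s • (u + β • Y) + t • Y)‖ ^ 2
        = ‖A - s • u‖ ^ 2 + (1 - s * β - t) ^ 2 * ‖Y‖ ^ 2 := by
    intro s t
    have hid : A + Y - (s • (u + β • Y) + t • Y)
        = (A - s • u) + (1 - s * β - t) • Y := by module
    have hinner : ⟪A - s • u, (1 - s * β - t) • Y⟫ = 0 := by
      simp [inner_sub_left, inner_smul_left, inner_smul_right, hAY, huY]
    rw [hid, norm_add_sq_real, hinner, norm_smul]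
    rw [mul_pow, Real.norm_eq_abs, sq_abs]
    ring
  rw [hX, hU']
  unfold condVar
  apply le_antisymm
  · apply le_ciInf
    rintro ⟨y, hy⟩
    obtain ⟨s, rfl⟩ := Submodule.mem_span_singleton.mp hy
    have hz : s • (u + β • Y) + (1 - s * β) • Y ∈
        Submodule.span ℝ ({u + β • Y, Y} : Set V) :=
      Submodule.mem_span_pair.mpr ⟨s, 1 - s * β, rfl⟩
    calc ⨅ y : Submodule.span ℝ ({u + β • Y, Y} : Set V), ‖A + Y - (y : V)‖ ^ 2
        ≤ ‖A + Y - (s • (u + β • Y) + (1 - s * β) • Y)‖ ^ 2 :=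
          ciInf_le (condVar_bdd _ _) ⟨_, hz⟩
      _ = ‖A - s • u‖ ^ 2 := by rw [hnorm]; ring
  · apply le_ciInf
    rintro ⟨y, hy⟩
    obtain ⟨s, t, rfl⟩ := Submodule.mem_span_pair.mp hy
    have hmem : s • u ∈ Submodule.span ℝ ({u} : Set V) :=
      Submodule.mem_span_singleton.mpr ⟨s, rfl⟩
    calc ⨅ y : Submodule.span ℝ ({u} : Set V), ‖A - (y : V)‖ ^ 2
        ≤ ‖A - s • u‖ ^ 2 := ciInf_le (condVar_bdd _ _) ⟨_, hmem⟩
      _ ≤ ‖A + Y - (s • (u + β • Y) + t • Y)‖ ^ 2 := by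
          rw [hnorm]; nlinarith [sq_nonneg (1 - s * β - t), sq_nonneg ‖Y‖]
end

section
/- Let A, B, Z be independent zero-mean real Gaussian random variables, X = A + B + Z, and let U' = \alpha A + \beta(B+Z) + W with W Gaussian independent of (A,B,Z). Then Var(X | U', Z) = Var(A + B | \alpha A + \beta B + W), where on the right-hand side A, B, W are treated as independent Gaussians with the same variances. -/
/-!
We model jointly Gaussian zero-mean random variables as vectors in a real inner
product space (the L² space of zero-mean variables): the variance of `x` is
`‖x‖²`, the covariance of `x` and `y` is `⟪x, y⟫`, and independence of jointly
Gaussian zero-mean variables corresponds to orthogonality.  For jointly Gaussian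
variables, the MMSE conditional variance `Var(x | S)` equals the squared distance
from `x` to the linear span of `S`, and `E[x | s]` is the orthogonal projection
of `x` onto `s`.
-/

open Real RealInnerProductSpace

/-- With A, B, Z, W independent zero-mean Gaussians, X = A+B+Z and
U' = αA + β(B+Z) + W, we have Var(X | U', Z) = Var(A+B | αA + βB + W). -/
theorem stmt_10 {V : Type*} [NormedAddCommGroup V] [InnerProductSpace ℝ V]
    (A B Z W : V) (σA σB σZ σW : ℝ)
    (hσA : 0 < σA) (hσB : 0 < σB) (hσZ : 0 < σZ) (hσW : 0 < σW)
    (hA : ‖A‖ ^ 2 = σA) (hB : ‖B‖ ^ 2 = σB) (hZ : ‖Z‖ ^ 2 = σZ) (hW : ‖W‖ ^ 2 = σW)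
    (hAB : ⟪A, B⟫ = 0) (hAZ : ⟪A, Z⟫ = 0) (hAW : ⟪A, W⟫ = 0)
    (hBZ : ⟪B, Z⟫ = 0) (hBW : ⟪B, W⟫ = 0) (hZW : ⟪Z, W⟫ = 0)
    (α β : ℝ) :
    condVar (A + B + Z) {α • A + β • (B + Z) + W, Z} =
      condVar (A + B) {α • A + β • B + W} := by
  classical
  have bdd : ∀ (x : V) (K : Submodule ℝ V),
      BddBelow (Set.range fun y : K => ‖x - (y : V)‖ ^ 2) := by
    intro x K
    refine ⟨0, ?_⟩
    rintro _ ⟨y, rfl⟩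
    positivity
  unfold condVar
  apply le_antisymm
  · apply le_ciInf
    rintro ⟨y, hy⟩
    rw [Submodule.mem_span_singleton] at hy
    obtain ⟨t, rfl⟩ := hy
    refine ciInf_le_of_le (bdd _ _)
      ⟨t • (α • A + β • (B + Z) + W) + (1 - t * β) • Z,
        Submodule.add_mem _
          (Submodule.smul_mem _ _ (Submodule.subset_span (by simp)))
          (Submodule.smul_mem _ _ (Submodule.subset_span (by simp)))⟩ ?_
    have h : (A + B + Z) - (t • (α • A + β • (B + Z) + W) + (1 - t * β) • Z)
        = (A + B) - t • (α • A + β • B + W) := by module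
    rw [h]
  · apply le_ciInf
    rintro ⟨y, hy⟩
    rw [Submodule.mem_span_pair] at hy
    obtain ⟨s, r, rfl⟩ := hy
    refine ciInf_le_of_le (bdd _ _)
      ⟨s • (α • A + β • B + W),
        Submodule.smul_mem _ _ (Submodule.mem_span_singleton_self _)⟩ ?_
    have h : (A + B + Z) - (s • (α • A + β • (B + Z) + W) + r • Z)
        = ((A + B) - s • (α • A + β • B + W)) + (1 - s * β - r) • Z := by module
    rw [h, norm_add_sq_real]
    have hinner : ⟪(A + B) - s • (α • A + β • B + W), (1 - s * β - r) • Z⟫ = 0 := by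
      simp [inner_sub_left, inner_add_left, inner_add_right, inner_smul_left,
        inner_smul_right, hAZ, hBZ, real_inner_comm Z W, hZW]
    rw [hinner]
    nlinarith [sq_nonneg ‖(1 - s * β - r) • Z‖]
end
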